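/- Let X ⊂ P^r be an integral and non-degenerate projective variety over an algebraically closed field of characteristic zero, b ≥ 2, and q ∈ P^r. Suppose Z and A are zero-dimensional subschemes of X with Z ≠ A, q ∈ ⟨Z⟩ ∩ ⟨A⟩, q ∉ ⟨Z'⟩ for every proper subscheme Z' ⊊ Z, and q ∉ ⟨A'⟩ for every proper subscheme A' ⊊ A. Then h^1(P^r, I_{Z∪A}(1)) > 0. -/

import Mathlib

/- Common framework: projective space over a field as `Projectivization`,
Zariski-closed subsets cut out by homogeneous polynomials, dimension via Krull
dimension of chains of irreducible closed subsets, linear spans, X-rank,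
secant varieties, embedded (Zariski) tangent spaces, smooth locus, tangential
variety, joins, genericity, and zero-dimensional scheme data. -/

open scoped BigOperators

noncomputable section

namespace SecantPaper

variable (K : Type) [Field K] (ι : Type) [Fintype ι] [DecidableEq ι]

/-- Projective space `ℙ^{#ι - 1}` over `K`. -/
abbrev Pj := Projectivization K (ι → K)

variable {K ι}

/-- A polynomial vanishes at a projective point (tested on the chosen representative;
for homogeneous polynomials this is representative-independent). -/
def vanishAt (f : MvPolynomial ι K) (q : Pj K ι) : Prop :=
  MvPolynomial.eval q.rep f = 0

/-- Zariski-closed subsets: common zero loci of families of homogeneous polynomials. -/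
def IsZClosed (C : Set (Pj K ι)) : Prop :=
  ∃ F : Set (MvPolynomial ι K), (∀ f ∈ F, ∃ d, f.IsHomogeneous d) ∧
    C = {q | ∀ f ∈ F, vanishAt f q}

/-- Zariski closure. -/
def zClosure (S : Set (Pj K ι)) : Set (Pj K ι) :=
  ⋂₀ {C | IsZClosed C ∧ S ⊆ C}

/-- Irreducibility with respect to Zariski-closed subsets. -/
def IsZIrred (S : Set (Pj K ι)) : Prop :=
  S.Nonempty ∧ ∀ C₁ C₂ : Set (Pj K ι), IsZClosed C₁ → IsZClosed C₂ →
    S ⊆ C₁ ∪ C₂ → S ⊆ C₁ ∨ S ⊆ C₂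

/-- Dimension of a subset of projective space: Krull dimension of the poset of
irreducible Zariski-closed subsets contained in it. -/
def zdim (S : Set (Pj K ι)) : WithBot ℕ∞ :=
  Order.krullDim {C : Set (Pj K ι) // IsZClosed C ∧ IsZIrred C ∧ C ⊆ S}

/-- The linear subspace (affine cone of the linear span) generated by a set of
projective points. -/
def projSubmodule (S : Set (Pj K ι)) : Submodule K (ι → K) :=
  Submodule.span K (Projectivization.rep '' S)

/-- Linear span of a set of projective points, as a subset of projective space. -/
def projSpan (S : Set (Pj K ι)) : Set (Pj K ι) :=
  {q | q.rep ∈ projSubmodule S}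

/-- Non-degeneracy: the set spans the whole projective space. -/
def Nondegenerate (X : Set (Pj K ι)) : Prop :=
  projSubmodule X = ⊤

/-- The `X`-rank of a point `q`: minimal cardinality of a finite subset of `X`
whose linear span contains `q`. -/
def xRank (X : Set (Pj K ι)) (q : Pj K ι) : ℕ :=
  sInf {k | ∃ S : Finset (Pj K ι), ↑S ⊆ X ∧ S.card = k ∧ q ∈ projSpan (S : Set (Pj K ι))}

/-- The `s`-secant variety of `X`. -/
def secantVariety (X : Set (Pj K ι)) (s : ℕ) : Set (Pj K ι) :=
  zClosure (⋃ S ∈ {S : Finset (Pj K ι) | ↑S ⊆ X ∧ S.card = s}, projSpan (S : Set (Pj K ι)))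

/-- The affine cone of the embedded (Zariski) tangent space of `X` at `p`:
common kernel of the differentials at `p` of all homogeneous polynomials
vanishing on `X`. -/
def tangentSubmodule (X : Set (Pj K ι)) (p : Pj K ι) : Submodule K (ι → K) :=
  ⨅ f ∈ {f : MvPolynomial ι K | (∃ d, f.IsHomogeneous d) ∧ ∀ q ∈ X, vanishAt f q},
    LinearMap.ker (∑ i : ι,
      MvPolynomial.eval p.rep (MvPolynomial.pderiv i f) • (LinearMap.proj i : ((ι → K) →ₗ[K] K)))

/-- The embedded projective tangent space `T_p X ⊆ ℙ^r`. -/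
def projTangent (X : Set (Pj K ι)) (p : Pj K ι) : Set (Pj K ι) :=
  {q | q.rep ∈ tangentSubmodule X p}

/-- Smooth locus: points where the embedded tangent space has minimal dimension. -/
def smoothLocus (X : Set (Pj K ι)) : Set (Pj K ι) :=
  {p ∈ X | ∀ q ∈ X,
    Module.finrank K (tangentSubmodule X p) ≤ Module.finrank K (tangentSubmodule X q)}

/-- The tangential variety `τ(X)`: closure of the union of the embedded tangent
spaces at smooth points. -/
def tangentialVariety (X : Set (Pj K ι)) : Set (Pj K ι) :=
  zClosure (⋃ p ∈ smoothLocus X, projTangent X p)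

/-- Join of two subvarieties: closure of the union of lines joining their points. -/
def joinVar (A B : Set (Pj K ι)) : Set (Pj K ι) :=
  zClosure {q | ∃ a ∈ A, ∃ b ∈ B, q ∈ projSpan {a, b}}

/-- Iterated join of `τ(X)` with copies of `X`. -/
def tauJoinAux (X : Set (Pj K ι)) : ℕ → Set (Pj K ι)
  | 0 => tangentialVariety X
  | k + 1 => joinVar (tauJoinAux X k) X

/-- `τ(X,b)`: the join of one copy of `τ(X)` and `b - 2` copies of `X`. -/
def tauJoin (X : Set (Pj K ι)) (b : ℕ) : Set (Pj K ι) :=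
  tauJoinAux X (b - 2)

/-- A property holds for a general point of `T`: it holds on the complement in `T`
of the zero locus of some polynomial not vanishing identically on `T`. -/
def genericP (T : Set (Pj K ι)) (P : Pj K ι → Prop) : Prop :=
  ∃ f : MvPolynomial ι K, (∃ q ∈ T, ¬ vanishAt f q) ∧ ∀ q ∈ T, ¬ vanishAt f q → P q

/-- Vanishing of a polynomial in `m` groups of variables at an `m`-tuple of
projective points. -/
def tVanish {m : ℕ} (f : MvPolynomial (Fin m × ι) K) (z : Fin m → Pj K ι) : Prop :=
  MvPolynomial.eval (fun p => (z p.1).rep p.2) f = 0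

/-- A property holds for a general `m`-tuple in a parameter set `T`. -/
def genericT {m : ℕ} (T : Set (Fin m → Pj K ι)) (P : (Fin m → Pj K ι) → Prop) : Prop :=
  ∃ f : MvPolynomial (Fin m × ι) K,
    (∃ z ∈ T, ¬ tVanish f z) ∧ ∀ z ∈ T, ¬ tVanish f z → P z

/-- Data of an element of `𝒵(X,b)`: a connected degree-2 scheme `v` supported at a
smooth point `o` (recorded by the tangent direction `t ∈ T_o X`, `t ≠ o`, so that
`⟨v⟩` is the line through `o` and `t`) together with `b - 2` further distinct
points of `X`. -/
def ZData (X : Set (Pj K ι)) (b : ℕ) (o t : Pj K ι) (S : Finset (Pj K ι)) : Prop :=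
  o ∈ smoothLocus X ∧ t ∈ projTangent X o ∧ t ≠ o ∧ ↑S ⊆ X ∧ o ∉ S ∧ S.card + 2 = b

/-- The linear span `⟨Z⟩` of the degree-`b` scheme `Z = v ∪ {p_1, …, p_{b-2}}`. -/
def zSpan (o t : Pj K ι) (S : Finset (Pj K ι)) : Set (Pj K ι) :=
  projSpan (insert o (insert t (S : Set (Pj K ι))))

/-- `♯(𝒵(X,b,q)) = 1`: there is a scheme `Z ∈ 𝒵(X,b)` with `q ∈ ⟨Z⟩`, and it is
unique as a scheme (same support point `o`, same reduced points, same tangent line). -/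
def uniqueZ (X : Set (Pj K ι)) (b : ℕ) (q : Pj K ι) : Prop :=
  ∃ o t S, ZData X b o t S ∧ q ∈ zSpan o t S ∧
    ∀ o' t' S', ZData X b o' t' S' → q ∈ zSpan o' t' S' →
      o = o' ∧ S = S' ∧ projSpan {o, t} = projSpan ({o', t'} : Set (Pj K ι))

/-- Parameter space for schemes in `𝒵(X, m+2)`: tuples `(o, t, p_1, …, p_m)`. -/
def ZParam (X : Set (Pj K ι)) (m : ℕ) : Set (Fin (m + 2) → Pj K ι) :=
  {z | z 0 ∈ smoothLocus X ∧ z 1 ∈ projTangent X (z 0) ∧ z 1 ≠ z 0 ∧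
    (∀ i : Fin (m + 2), 2 ≤ (i : ℕ) → z i ∈ X ∧ z i ≠ z 0) ∧
    ∀ i j : Fin (m + 2), 2 ≤ (i : ℕ) → 2 ≤ (j : ℕ) → z i = z j → i = j}

/-- Parameter space of tangent lines: pairs `(p, t)` with `p` a smooth point of `X`
and `t ≠ p` a point of the embedded tangent space, so the line is `⟨{p, t}⟩`. -/
def TangentLineParam (X : Set (Pj K ι)) : Set (Fin 2 → Pj K ι) :=
  {z | z 0 ∈ smoothLocus X ∧ z 1 ∈ projTangent X (z 0) ∧ z 1 ≠ z 0}

/-- `X` is tangentially degenerate if it is NOT the case that a general tangent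
line at a general smooth point meets `X` only at the point of tangency. -/
def TangentiallyDegenerate (X : Set (Pj K ι)) : Prop :=
  ¬ genericT (TangentLineParam X)
      (fun z => ∀ y ∈ X, y ∈ projSpan {z 0, z 1} → y = z 0)

/-- `X` is (scheme-theoretically) cut out by quadrics: it is the common zero locus
of the quadrics containing it, and these quadrics cut out its Zariski tangent
spaces. -/
def CutByQuadrics (X : Set (Pj K ι)) : Prop :=
  (∀ q : Pj K ι,
      (∀ f : MvPolynomial ι K, f.IsHomogeneous 2 → (∀ x ∈ X, vanishAt f x) → vanishAt f q)
      → q ∈ X) ∧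
  ∀ p ∈ X, ∀ w : ι → K,
    (∀ f : MvPolynomial ι K, f.IsHomogeneous 2 → (∀ x ∈ X, vanishAt f x) →
      (∑ i : ι, MvPolynomial.eval p.rep (MvPolynomial.pderiv i f) * w i) = 0) →
    w ∈ tangentSubmodule X p

/-- The closure of the image of `X` under the rational map to `ℙ(κ)` given by the
coordinate functions `A`. -/
def imageVariety {κ : Type} [Fintype κ] [DecidableEq κ]
    (X : Set (Pj K ι)) (A : Pj K ι → (κ → K)) : Set (Pj K κ) :=
  zClosure {p | ∃ x ∈ X, ∃ h : A x ≠ 0, p = Projectivization.mk K (A x) h}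

/-- The degree-1 polynomial associated to a linear functional. -/
def dualToPoly (φ : Module.Dual K (ι → K)) : MvPolynomial ι K :=
  ∑ i : ι, φ (Pi.single i 1) • MvPolynomial.X i

/-- The homogeneous ideal of a subset `X` of projective space. -/
def homIdeal (X : Set (Pj K ι)) : Ideal (MvPolynomial ι K) :=
  Ideal.span {f | (∃ d, f.IsHomogeneous d) ∧ ∀ q ∈ X, vanishAt f q}

/-- The irrelevant-free ideal of linear forms vanishing at a point. -/
def ptIdeal (o : Pj K ι) : Ideal (MvPolynomial ι K) :=
  Ideal.span {f | f.IsHomogeneous 1 ∧ vanishAt f o}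

/-- Local (at `o`) membership in an ideal: membership after multiplying by some
homogeneous polynomial not vanishing at `o` (i.e. membership in the localization). -/
def locMem (f : MvPolynomial ι K) (I : Ideal (MvPolynomial ι K)) (o : Pj K ι) : Prop :=
  ∃ g : MvPolynomial ι K, (∃ d, g.IsHomogeneous d) ∧ ¬ vanishAt g o ∧ g * f ∈ I

/-- Common kernel of a set of linear functionals. -/
def dualZero (D : Set (Module.Dual K (ι → K))) : Submodule K (ι → K) :=
  ⨅ φ ∈ D, LinearMap.ker φ

/-- An ideal is homogeneous. -/
def IdealHomog (I : Ideal (MvPolynomial ι K)) : Prop :=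
  ∀ f ∈ I, ∀ d : ℕ, MvPolynomial.homogeneousComponent d f ∈ I

/-- An ideal is saturated with respect to the irrelevant maximal ideal. -/
def IdealSaturated (I : Ideal (MvPolynomial ι K)) : Prop :=
  ∀ f : MvPolynomial ι K, (∀ i : ι, MvPolynomial.X i * f ∈ I) → f ∈ I

/-- Projective zero locus of an ideal. -/
def zeroLocusI (I : Ideal (MvPolynomial ι K)) : Set (Pj K ι) :=
  {q | ∀ f ∈ I, vanishAt f q}

/-- `I` is the saturated homogeneous ideal of a zero-dimensional closed subscheme of `X`. -/
def SchemeIdeal (X : Set (Pj K ι)) (I : Ideal (MvPolynomial ι K)) : Prop :=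
  IdealHomog I ∧ IdealSaturated I ∧ homIdeal X ≤ I ∧ (zeroLocusI I).Finite

/-- Membership in the saturation of `I` (for ideals with finite zero locus):
local membership at every point of the zero locus. -/
def satMem (f : MvPolynomial ι K) (I : Ideal (MvPolynomial ι K)) : Prop :=
  ∀ q ∈ zeroLocusI I, locMem f I q

/-- The affine cone of the linear span of the subscheme with ideal `I`. -/
def linSpanI (I : Ideal (MvPolynomial ι K)) : Submodule K (ι → K) :=
  dualZero {φ | dualToPoly φ ∈ I}

/-- Dimension of the degree-`d` graded piece of an ideal. -/
def gradedDim (I : Ideal (MvPolynomial ι K)) (d : ℕ) : ℕ :=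
  Module.finrank K
    ↥((MvPolynomial.homogeneousSubmodule ι K d) ⊓ (Submodule.restrictScalars K I))

/-- Dimension of the degree-`d` graded piece of the quotient by an ideal. -/
def gradedQuotDim (I : Ideal (MvPolynomial ι K)) (d : ℕ) : ℕ :=
  Module.finrank K ↥(MvPolynomial.homogeneousSubmodule ι K d) - gradedDim I d

end SecantPaper

namespace SecantPaper


set_option linter.unusedSectionVars false
set_option linter.unusedVariables false
set_option maxHeartbeats 1000000
set_option synthInstance.maxHeartbeats 400000

variable {K : Type} [Field K] {ι : Type} [Fintype ι] [DecidableEq ι]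

local notation "R" => MvPolynomial ι K
local notation "Md" => MvPolynomial.homogeneousSubmodule ι K


lemma degree_one_single (m : ι →₀ ℕ) (h : ∑ i ∈ m.support, m i = 1) :
    ∃ i, m = Finsupp.single i 1 := by
  have hsupnz : m.support.Nonempty := by
    rcases Finset.eq_empty_or_nonempty m.support with he | hne
    · rw [he] at h; simp at h
    · exact hne
  obtain ⟨i, hi⟩ := hsupnz
  have hmi : 1 ≤ m i := Nat.one_le_iff_ne_zero.mpr (Finsupp.mem_support_iff.mp hi)
  have hsum : m i + ∑ j ∈ m.support.erase i, m j = 1 := by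
    rw [Finset.add_sum_erase _ _ hi]; exact h
  have hmi1 : m i = 1 := by omega
  have hrest : ∀ j ∈ m.support.erase i, m j = 0 := by
    intro j hj
    have : ∑ j ∈ m.support.erase i, m j = 0 := by omega
    exact Finset.sum_eq_zero_iff.mp this j hj
  refine ⟨i, ?_⟩
  ext j
  by_cases hji : j = i
  · subst hji; simp [hmi1]
  · rw [Finsupp.single_apply, if_neg (by exact fun hh => hji hh.symm)]
    by_cases hjs : j ∈ m.support
    · exact hrest j (Finset.mem_erase.mpr ⟨hji, hjs⟩)
    · exact Finsupp.notMem_support_iff.mp hjs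

lemma homog_support_deg {p : R} {n : ℕ} (hp : p.IsHomogeneous n) {m : ι →₀ ℕ}
    (hm : MvPolynomial.coeff m p ≠ 0) : ∑ i ∈ m.support, m i = n := by
  have := hp hm
  simpa [Finsupp.weight_apply, Finsupp.sum] using this

lemma mem_M1_rep {p : R} (hp : p ∈ Md 1) :
    p = ∑ i : ι, (MvPolynomial.coeff (Finsupp.single i 1) p) • MvPolynomial.X i := by
  have hhom : p.IsHomogeneous 1 := hp
  apply MvPolynomial.ext
  intro d
  rw [MvPolynomial.coeff_sum]
  simp only [MvPolynomial.coeff_smul, MvPolynomial.coeff_X', smul_eq_mul]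
  by_cases hd : ∃ j, d = Finsupp.single j 1
  · obtain ⟨j, rfl⟩ := hd
    rw [Finset.sum_eq_single j]
    · simp
    · intro i _ hij
      rw [if_neg, mul_zero]
      intro hsingle
      exact hij (Finsupp.single_left_injective one_ne_zero hsingle)
    · intro hj; exact absurd (Finset.mem_univ j) hj
  · have hcd : MvPolynomial.coeff d p = 0 := by
      by_contra hc
      exact hd (by
        obtain ⟨i, hi⟩ := degree_one_single d (homog_support_deg hhom hc)
        exact ⟨i, hi⟩)
    rw [hcd]
    symm
    apply Finset.sum_eq_zero
    intro i _
    rw [if_neg (fun h => hd ⟨i, h.symm⟩), mul_zero]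

lemma M1_eval_linear {p : R} (hp : p ∈ Md 1) (x : ι → K) :
    MvPolynomial.eval x p = ∑ i : ι, MvPolynomial.coeff (Finsupp.single i 1) p * x i := by
  conv_lhs => rw [mem_M1_rep hp]
  simp [MvPolynomial.eval_sum]

/-- finite dimensionality of graded pieces -/
instance fd_Md (d : ℕ) : FiniteDimensional K ↥(Md d) := by
  apply Submodule.finiteDimensional_of_le (S₂ := MvPolynomial.restrictTotalDegree ι K d)
  intro p hp
  rw [MvPolynomial.mem_restrictTotalDegree]
  exact MvPolynomial.IsHomogeneous.totalDegree_le hp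

lemma finrank_M1 : Module.finrank K ↥(Md 1) = Fintype.card ι := by
  let f : (ι → K) →ₗ[K] ↥(Md 1) :=
    { toFun := fun c => ⟨∑ i : ι, c i • MvPolynomial.X i,
        Submodule.sum_mem _ (fun i _ => Submodule.smul_mem _ _
          ((MvPolynomial.mem_homogeneousSubmodule _ _).mpr (MvPolynomial.isHomogeneous_X _ _)))⟩
      map_add' := by
        intro a b; ext1; simp [add_smul, Finset.sum_add_distrib]
      map_smul' := by
        intro a b; ext1; simp [smul_smul, Finset.smul_sum] }
  have hbij : Function.Bijective f := by
    constructor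
    · intro a b hab
      have h1 : (f a : R) = (f b : R) := congrArg _ hab
      funext i
      have := congrArg (MvPolynomial.coeff (Finsupp.single i 1)) h1
      rw [show ((f a : R)) = ∑ i : ι, a i • MvPolynomial.X i from rfl,
        show ((f b : R)) = ∑ i : ι, b i • MvPolynomial.X i from rfl] at this
      simp only [MvPolynomial.coeff_sum, MvPolynomial.coeff_smul, MvPolynomial.coeff_X',
        smul_eq_mul] at this
      have hsingleeq : ∀ x : ι, (Finsupp.single x 1 = Finsupp.single i (1:ℕ)) ↔ x = i :=
        fun x => ⟨fun h => Finsupp.single_left_injective one_ne_zero h, fun h => by rw [h]⟩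
      simp only [hsingleeq] at this
      simpa using this
    · rintro ⟨p, hp⟩
      refine ⟨fun i => MvPolynomial.coeff (Finsupp.single i 1) p, ?_⟩
      ext1
      exact (mem_M1_rep hp).symm
  have := (LinearEquiv.ofBijective f hbij).finrank_eq
  rw [← this]
  simp [Module.finrank_pi]


lemma homog_support_deg' {p : R} {n : ℕ} (hp : p.IsHomogeneous n) {m : ι →₀ ℕ}
    (hm : MvPolynomial.coeff m p ≠ 0) : ∑ i ∈ m.support, m i = n := by
  have := hp hm
  simpa [Finsupp.weight_apply, Finsupp.sum] using this

lemma hcomp_mul {f g : R} {d : ℕ} (hf : f.IsHomogeneous d) (e : ℕ) :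
    MvPolynomial.homogeneousComponent (e + d) (g * f) =
    MvPolynomial.homogeneousComponent e g * f := by
  conv_lhs => rw [← MvPolynomial.sum_homogeneousComponent g]
  rw [Finset.sum_mul, map_sum]
  have hterm : ∀ j ∈ Finset.range (g.totalDegree + 1),
      MvPolynomial.homogeneousComponent (e + d) (MvPolynomial.homogeneousComponent j g * f)
      = if j = e then MvPolynomial.homogeneousComponent j g * f else 0 := by
    intro j _
    rw [MvPolynomial.homogeneousComponent_of_mem
      (((MvPolynomial.homogeneousComponent_isHomogeneous j g).mul hf))]
    by_cases h : j = e
    · subst h; simp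
    · rw [if_neg (by omega), if_neg h]
  rw [Finset.sum_congr rfl hterm, Finset.sum_ite_eq' (Finset.range (g.totalDegree + 1)) e
      (fun j => MvPolynomial.homogeneousComponent j g * f)]
  by_cases he : e ∈ Finset.range (g.totalDegree + 1)
  · rw [if_pos he]
  · rw [if_neg he, MvPolynomial.homogeneousComponent_eq_zero, zero_mul]
    simp only [Finset.mem_range, not_lt] at he
    omega

lemma hcomp_mul_lt {f g : R} {d : ℕ} (hf : f.IsHomogeneous d) {c : ℕ} (hc : c < d) :
    MvPolynomial.homogeneousComponent c (g * f) = 0 := by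
  conv_lhs => rw [← MvPolynomial.sum_homogeneousComponent g]
  rw [Finset.sum_mul, map_sum]
  apply Finset.sum_eq_zero
  intro j _
  rw [MvPolynomial.homogeneousComponent_of_mem
    (((MvPolynomial.homogeneousComponent_isHomogeneous j g).mul hf))]
  rw [if_neg (by omega)]

lemma eval_smul_homog {f : R} {n : ℕ} (hf : f.IsHomogeneous n) (c : K) (x : ι → K) :
    MvPolynomial.eval (c • x) f = c ^ n * MvPolynomial.eval x f := by
  conv_lhs => rw [f.as_sum]
  conv_rhs => rw [f.as_sum]
  rw [map_sum, map_sum, Finset.mul_sum]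
  apply Finset.sum_congr rfl
  intro m hm
  rw [MvPolynomial.eval_monomial, MvPolynomial.eval_monomial]
  have hdeg : ∑ i ∈ m.support, m i = n :=
    homog_support_deg' hf (MvPolynomial.mem_support_iff.mp hm)
  rw [Finsupp.prod, Finsupp.prod]
  have : ∀ i ∈ m.support, (c • x) i ^ m i = c ^ m i * x i ^ m i := fun i _ => by
    simp [mul_pow]
  rw [Finset.prod_congr rfl this, Finset.prod_mul_distrib, Finset.prod_pow_eq_pow_sum, hdeg]
  ring


variable [IsAlgClosed K]

lemma monomial_mem_of_X_pow_mem {A : Ideal R} {i : ι} {n : ℕ}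
    (h : MvPolynomial.X i ^ n ∈ A) {m : ι →₀ ℕ} (hm : n ≤ m i) :
    MvPolynomial.monomial m (1 : K) ∈ A := by
  have hle : Finsupp.single i n ≤ m := Finsupp.single_le_iff.mpr hm
  have hdecomp : m = Finsupp.single i n + (m - Finsupp.single i n) :=
    (add_tsub_cancel_of_le hle).symm
  have : MvPolynomial.monomial m (1 : K) =
      MvPolynomial.X i ^ n * MvPolynomial.monomial (m - Finsupp.single i n) 1 := by
    rw [MvPolynomial.X_pow_eq_monomial, MvPolynomial.monomial_mul, one_mul, ← hdecomp]
  rw [this]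
  exact Ideal.mul_mem_right _ _ h

/-- Projective Nullstellensatz consequence: a homogeneous ideal with empty projective
zero locus contains all monomials of sufficiently large degree. -/
lemma nss_monomials {A : Ideal R} (hA : IdealHomog A) (hempty : zeroLocusI A = ∅) :
    ∃ N : ℕ, ∀ m : ι →₀ ℕ, N ≤ ∑ i ∈ m.support, m i →
      MvPolynomial.monomial m (1 : K) ∈ A := by
  by_cases htop : (1 : R) ∈ A
  · exact ⟨0, fun m _ => by
      have : A = ⊤ := Ideal.eq_top_iff_one A |>.mpr htop
      rw [this]; trivial⟩
  have hX : ∀ i : ι, MvPolynomial.X i ∈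
      MvPolynomial.vanishingIdeal K (MvPolynomial.zeroLocus K A) := by
    intro i
    rw [MvPolynomial.mem_vanishingIdeal_iff]
    intro x hx
    by_cases hx0 : x = 0
    · subst hx0; simp
    · exfalso
      have hmem : Projectivization.mk K x hx0 ∈ zeroLocusI A := by
        intro f hf
        unfold vanishAt
        obtain ⟨a, ha⟩ := (Projectivization.mk_eq_mk_iff K _ _
          (Projectivization.rep_nonzero _) hx0).mp (Projectivization.mk_rep _)
        rw [← ha]
        conv_lhs => rw [← MvPolynomial.sum_homogeneousComponent f]
        rw [map_sum]
        apply Finset.sum_eq_zero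
        intro j _
        have hs : MvPolynomial.eval ((a : K) • x) (MvPolynomial.homogeneousComponent j f)
            = (a : K) ^ j * MvPolynomial.eval x (MvPolynomial.homogeneousComponent j f) :=
          eval_smul_homog (MvPolynomial.homogeneousComponent_isHomogeneous j f) _ x
        have hxz : MvPolynomial.eval x (MvPolynomial.homogeneousComponent j f) = 0 :=
          hx _ (hA f hf j)
        rw [show ((a : Kˣ) • x) = ((a : K) • x) from rfl, hs, hxz, mul_zero]
      rw [hempty] at hmem
      exact hmem
  have hXrad : ∀ i, MvPolynomial.X i ∈ A.radical := by
    intro i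
    rw [← MvPolynomial.vanishingIdeal_zeroLocus_eq_radical (K := K) A]
    exact hX i
  choose n hn using fun i => (Ideal.mem_radical_iff.mp (hXrad i))
  have hn1 : ∀ i, 1 ≤ n i := by
    intro i
    by_contra hlt
    push_neg at hlt
    have h0 : n i = 0 := by omega
    have := hn i
    rw [h0, pow_zero] at this
    exact htop this
  refine ⟨(∑ i : ι, (n i - 1)) + 1, fun m hm => ?_⟩
  have hex : ∃ i, n i ≤ m i := by
    by_contra hall
    push_neg at hall
    have hb : ∀ i, m i ≤ n i - 1 := fun i => by have := hall i; omega
    have : ∑ i ∈ m.support, m i ≤ ∑ i : ι, (n i - 1) :=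
      Finset.sum_le_sum_of_subset (Finset.subset_univ m.support) |>.trans_eq rfl |>.trans
        (Finset.sum_le_sum (fun i _ => hb i))
    omega
  obtain ⟨i, hi⟩ := hex
  exact monomial_mem_of_X_pow_mem (hn i) hi



/-- Colon ideal by a single element. -/
def colonF (A : Ideal (MvPolynomial ι K)) (f : MvPolynomial ι K) : Ideal (MvPolynomial ι K) where
  carrier := {g | g * f ∈ A}
  zero_mem' := by simp
  add_mem' := fun {a b} ha hb => by
    simp only [Set.mem_setOf_eq, add_mul] at *
    exact A.add_mem ha hb
  smul_mem' := fun c g hg => by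
    simp only [Set.mem_setOf_eq, smul_eq_mul, mul_assoc] at *
    exact A.mul_mem_left c hg

lemma mem_colonF {A : Ideal R} {f g : R} : g ∈ colonF A f ↔ g * f ∈ A := Iff.rfl

lemma colonF_homog {A : Ideal R} (hA : IdealHomog A) {f : R} {d : ℕ} (hf : f.IsHomogeneous d) :
    IdealHomog (colonF A f) := by
  intro g hg e
  rw [mem_colonF] at hg ⊢
  rw [← hcomp_mul hf e]
  exact hA _ hg _

/-- Saturation descent: if all monomial multiples of a fixed degree lie in a saturated ideal,
so does the element itself. -/
lemma sat_descent {A : Ideal R} (hsat : IdealSaturated A) {f : R} (N : ℕ)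
    (h : ∀ m : ι →₀ ℕ, ∑ i ∈ m.support, m i = N → MvPolynomial.monomial m (1 : K) * f ∈ A) :
    f ∈ A := by
  induction N generalizing f with
  | zero =>
    have := h 0 (by simp)
    simpa using this
  | succ k ih =>
    apply ih
    intro m hm
    apply hsat
    intro i
    have : MvPolynomial.X i * (MvPolynomial.monomial m (1:K) * f)
        = MvPolynomial.monomial (Finsupp.single i 1 + m) (1:K) * f := by
      rw [MvPolynomial.monomial_single_add, pow_one, mul_assoc]
    rw [this]
    apply h
    have h1 : ∀ m' : ι →₀ ℕ, ∑ j ∈ m'.support, m' j = ∑ j : ι, m' j := fun m' =>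
      Finset.sum_subset (Finset.subset_univ _) (fun x _ hx => Finsupp.notMem_support_iff.mp hx)
    rw [h1] at hm ⊢
    simp only [Finsupp.add_apply, Finset.sum_add_distrib]
    have hsingle : ∑ j : ι, (Finsupp.single i 1 : ι →₀ ℕ) j = 1 := by
      simp [Finsupp.single_apply]
    omega

/-- KEY: multiplication by a linear form not vanishing on the zero locus is injective
modulo a saturated homogeneous ideal. -/
lemma mul_L_cancel {A : Ideal R} (hhom : IdealHomog A) (hsat : IdealSaturated A)
    {L : R} (hL : L ∈ Md 1) (hLnv : ∀ P ∈ zeroLocusI A, ¬ vanishAt L P)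
    {f : R} {d : ℕ} (hf : f ∈ Md d) (hLf : L * f ∈ A) : f ∈ A := by
  have hBhom : IdealHomog (colonF A f) := colonF_homog hhom hf
  have hAB : A ≤ colonF A f := fun g hg => mem_colonF.mpr (Ideal.mul_mem_right f A hg)
  have hLB : L ∈ colonF A f := mem_colonF.mpr hLf
  have hempty : zeroLocusI (colonF A f) = ∅ := by
    rw [Set.eq_empty_iff_forall_notMem]
    intro P hP
    have hPA : P ∈ zeroLocusI A := fun g hg => hP g (hAB hg)
    exact hLnv P hPA (hP L hLB)
  obtain ⟨N, hN⟩ := nss_monomials hBhom hempty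
  exact sat_descent hsat N (fun m hm => mem_colonF.mp (hN m (le_of_eq hm.symm)))

/-- Surjectivity statement for multiplication by `L` in degree `d`. -/
def coversP (Q : Ideal (MvPolynomial ι K)) (L : MvPolynomial ι K) (d : ℕ) : Prop :=
  ∀ f ∈ MvPolynomial.homogeneousSubmodule ι K (d+1),
    ∃ g ∈ MvPolynomial.homogeneousSubmodule ι K d, f - L * g ∈ Q

lemma coversP_mono {Q Q' : Ideal R} (h : Q ≤ Q') {L : R} {d : ℕ}
    (hc : coversP Q L d) : coversP Q' L d := by
  intro f hf
  obtain ⟨g, hg, hfg⟩ := hc f hf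
  exact ⟨g, hg, h hfg⟩

lemma covers_of_large {Q : Ideal R} (hhom : IdealHomog Q) {L : R} (hL : L ∈ Md 1)
    (hLnv : ∀ P ∈ zeroLocusI Q, ¬ vanishAt L P) :
    ∃ N, ∀ d, N ≤ d → coversP Q L d := by
  set A' := Q ⊔ Ideal.span {L} with hA'
  have hQA : Q ≤ A' := le_sup_left
  have hLA : L ∈ A' := Submodule.mem_sup_right (Ideal.subset_span rfl)
  have hA'hom : IdealHomog A' := by
    intro f hf e
    obtain ⟨a, ha, b, hb, rfl⟩ := Submodule.mem_sup.mp hf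
    obtain ⟨h, rfl⟩ := Ideal.mem_span_singleton'.mp hb
    rw [map_add]
    apply Submodule.add_mem
    · exact hQA (hhom a ha e)
    rcases Nat.eq_zero_or_pos e with he | he
    · subst he
      rw [hcomp_mul_lt hL (by omega)]
      exact Submodule.zero_mem _
    · obtain ⟨e', rfl⟩ : ∃ e', e = e' + 1 := ⟨e - 1, by omega⟩
      rw [hcomp_mul hL e']
      exact Submodule.mem_sup_right (Ideal.mem_span_singleton'.mpr ⟨_, rfl⟩)
  have hempty : zeroLocusI A' = ∅ := by
    rw [Set.eq_empty_iff_forall_notMem]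
    intro P hP
    exact hLnv P (fun g hg => hP g (hQA hg)) (hP L hLA)
  obtain ⟨N, hN⟩ := nss_monomials hA'hom hempty
  refine ⟨N, fun d hd f hf => ?_⟩
  have hfA' : f ∈ A' := by
    rw [f.as_sum]
    apply Submodule.sum_mem
    intro m hm
    have hdeg : ∑ i ∈ m.support, m i = d + 1 :=
      homog_support_deg' hf (MvPolynomial.mem_support_iff.mp hm)
    have heq : MvPolynomial.monomial m (MvPolynomial.coeff m f)
        = MvPolynomial.C (MvPolynomial.coeff m f) * MvPolynomial.monomial m (1:K) := by
      rw [MvPolynomial.C_mul_monomial, mul_one]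
    rw [heq]
    exact Ideal.mul_mem_left _ _ (hN m (by omega))
  obtain ⟨a, ha, b, hb, hab⟩ := Submodule.mem_sup.mp hfA'
  obtain ⟨h, rfl⟩ := Ideal.mem_span_singleton'.mp hb
  refine ⟨MvPolynomial.homogeneousComponent d h,
    (MvPolynomial.mem_homogeneousSubmodule _ _).mpr
      (MvPolynomial.homogeneousComponent_isHomogeneous d h), ?_⟩
  have hfcomp : f = MvPolynomial.homogeneousComponent (d+1) a
      + MvPolynomial.homogeneousComponent d h * L := by
    have := congrArg (MvPolynomial.homogeneousComponent (d+1)) hab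
    rw [map_add, hcomp_mul hL d] at this
    rw [MvPolynomial.homogeneousComponent_of_mem hf, if_pos rfl] at this
    exact this.symm
  have : f - L * MvPolynomial.homogeneousComponent d h
      = MvPolynomial.homogeneousComponent (d+1) a := by
    rw [hfcomp]; ring
  rw [this]
  exact hhom a ha (d+1)


/-- Degree-`d` part of an ideal as submodule of the degree-`d` graded piece. -/
def SA (A : Ideal (MvPolynomial ι K)) (d : ℕ) :
    Submodule K ↥(MvPolynomial.homogeneousSubmodule ι K d) :=
  Submodule.comap (MvPolynomial.homogeneousSubmodule ι K d).subtype
    (Submodule.restrictScalars K A)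

lemma mem_SA {A : Ideal R} {d : ℕ} {x : ↥(Md d)} : x ∈ SA A d ↔ (x : R) ∈ A := Iff.rfl

/-- Hilbert function of `R/A` in degree `d`. -/
def hilb (A : Ideal (MvPolynomial ι K)) (d : ℕ) : ℕ :=
  Module.finrank K (↥(MvPolynomial.homogeneousSubmodule ι K d) ⧸ SA A d)

lemma hilb_add_finrank (A : Ideal R) (d : ℕ) :
    hilb A d + Module.finrank K ↥(SA A d) = Module.finrank K ↥(Md d) :=
  Submodule.finrank_quotient_add_finrank (SA A d)

/-- Multiplication by a fixed linear form, as map between graded pieces. -/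
def lmul {L : R} (hL : L ∈ Md 1) (d : ℕ) : ↥(Md d) →ₗ[K] ↥(Md (d+1)) where
  toFun x := ⟨L * (x : R), by
    rw [MvPolynomial.mem_homogeneousSubmodule]
    have := ((MvPolynomial.mem_homogeneousSubmodule _ _).mp hL).mul
      ((MvPolynomial.mem_homogeneousSubmodule _ _).mp x.2)
    rwa [add_comm] at this⟩
  map_add' x y := by ext; simp [mul_add]
  map_smul' c x := by ext; simp [Algebra.mul_smul_comm]

lemma lmul_le {A : Ideal R} {L : R} (hL : L ∈ Md 1) (d : ℕ) :
    SA A d ≤ Submodule.comap (lmul hL d) (SA A (d+1)) := by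
  intro x hx
  simp only [Submodule.mem_comap, mem_SA] at *
  exact Ideal.mul_mem_left _ _ hx

/-- Multiplication by `L` on the degree-`d` piece of `R/A`. -/
def lmulQ (A : Ideal (MvPolynomial ι K)) {L : MvPolynomial ι K}
    (hL : L ∈ MvPolynomial.homogeneousSubmodule ι K 1) (d : ℕ) :
    (↥(MvPolynomial.homogeneousSubmodule ι K d) ⧸ SA A d) →ₗ[K]
    (↥(MvPolynomial.homogeneousSubmodule ι K (d+1)) ⧸ SA A (d+1)) :=
  Submodule.mapQ _ _ (lmul hL d) (lmul_le hL d)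

lemma lmulQ_inj {A : Ideal R} (hhom : IdealHomog A) (hsat : IdealSaturated A)
    {L : R} (hL : L ∈ Md 1) (hLnv : ∀ P ∈ zeroLocusI A, ¬ vanishAt L P) (d : ℕ) :
    Function.Injective (lmulQ A hL d) := by
  rw [← LinearMap.ker_eq_bot, Submodule.eq_bot_iff]
  intro y hy
  obtain ⟨x, rfl⟩ := Submodule.Quotient.mk_surjective _ y
  rw [LinearMap.mem_ker, lmulQ, Submodule.mapQ_apply, Submodule.Quotient.mk_eq_zero] at hy
  rw [Submodule.Quotient.mk_eq_zero]
  rw [mem_SA] at hy ⊢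
  exact mul_L_cancel hhom hsat hL hLnv x.2 hy

lemma lmulQ_surj_of_covers {A : Ideal R} {L : R} (hL : L ∈ Md 1) {d : ℕ}
    (hc : coversP A L d) : Function.Surjective (lmulQ A hL d) := by
  intro y
  obtain ⟨f, rfl⟩ := Submodule.Quotient.mk_surjective _ y
  obtain ⟨g, hg, hfg⟩ := hc (f : R) f.2
  refine ⟨Submodule.Quotient.mk ⟨g, hg⟩, ?_⟩
  rw [lmulQ, Submodule.mapQ_apply]
  rw [Submodule.Quotient.eq]
  rw [mem_SA]
  show (L * g : R) - (f : R) ∈ A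
  have : (L * g : R) - (f : R) = -((f:R) - L * g) := by ring
  rw [this]
  exact Submodule.neg_mem _ hfg

lemma covers_of_lmulQ_surj {A : Ideal R} {L : R} (hL : L ∈ Md 1) {d : ℕ}
    (hs : Function.Surjective (lmulQ A hL d)) : coversP A L d := by
  intro f hf
  obtain ⟨y, hy⟩ := hs (Submodule.Quotient.mk ⟨f, hf⟩)
  obtain ⟨x, rfl⟩ := Submodule.Quotient.mk_surjective _ y
  rw [lmulQ, Submodule.mapQ_apply, Submodule.Quotient.eq, mem_SA] at hy
  exact ⟨(x : R), x.2, by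
    have : (f : R) - L * (x : R) = -(((lmul hL d) x : R) - f) := by
      show (f : R) - L * (x : R) = -((L * (x : R)) - f)
      ring
    rw [this]
    exact Submodule.neg_mem _ hy⟩

lemma hilb_le_succ {A : Ideal R} (hhom : IdealHomog A) (hsat : IdealSaturated A)
    {L : R} (hL : L ∈ Md 1) (hLnv : ∀ P ∈ zeroLocusI A, ¬ vanishAt L P) (d : ℕ) :
    hilb A d ≤ hilb A (d+1) :=
  LinearMap.finrank_le_finrank_of_injective (lmulQ_inj hhom hsat hL hLnv d)

lemma hilb_mono {A : Ideal R} (hhom : IdealHomog A) (hsat : IdealSaturated A)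
    {L : R} (hL : L ∈ Md 1) (hLnv : ∀ P ∈ zeroLocusI A, ¬ vanishAt L P) :
    ∀ a b : ℕ, a ≤ b → hilb A a ≤ hilb A b := by
  intro a b hab
  induction b with
  | zero => simp_all
  | succ n ih =>
    rcases Nat.lt_or_ge a (n+1) with h | h
    · exact (ih (by omega)).trans (hilb_le_succ hhom hsat hL hLnv n)
    · have : a = n + 1 := by omega
      subst this; rfl

lemma hilb_succ_le_of_covers {A : Ideal R} {L : R} (hL : L ∈ Md 1) {d : ℕ}
    (hc : coversP A L d) : hilb A (d+1) ≤ hilb A d := by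
  have hs := lmulQ_surj_of_covers hL hc
  have h1 : LinearMap.range (lmulQ A hL d) = ⊤ := LinearMap.range_eq_top.mpr hs
  have h2 := LinearMap.finrank_range_le (lmulQ A hL d)
  rw [h1] at h2
  rwa [finrank_top] at h2

lemma lmulQ_surj_of_eq {A : Ideal R} (hhom : IdealHomog A) (hsat : IdealSaturated A)
    {L : R} (hL : L ∈ Md 1) (hLnv : ∀ P ∈ zeroLocusI A, ¬ vanishAt L P) {d : ℕ}
    (heq : hilb A d = hilb A (d+1)) : Function.Surjective (lmulQ A hL d) :=
  (LinearMap.injective_iff_surjective_of_finrank_eq_finrank heq).mp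
    (lmulQ_inj hhom hsat hL hLnv d)

lemma lmulQ_inj_of_eq_surj {A : Ideal R} {L : R} (hL : L ∈ Md 1) {d : ℕ}
    (heq : hilb A d = hilb A (d+1)) (hs : Function.Surjective (lmulQ A hL d)) :
    Function.Injective (lmulQ A hL d) :=
  (LinearMap.injective_iff_surjective_of_finrank_eq_finrank heq).mpr hs

/-- Mayer–Vietoris for degreewise dimensions. -/
lemma SA_inf (I J : Ideal R) (d : ℕ) : SA (I ⊓ J) d = SA I d ⊓ SA J d := by
  ext x
  simp [mem_SA, Submodule.mem_inf]

lemma SA_sup {I J : Ideal R} (hI : IdealHomog I) (hJ : IdealHomog J) (d : ℕ) :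
    SA (I ⊔ J) d = SA I d ⊔ SA J d := by
  apply le_antisymm
  · intro x hx
    rw [mem_SA] at hx
    obtain ⟨a, ha, b, hb, hab⟩ := Submodule.mem_sup.mp hx
    have hxd : MvPolynomial.homogeneousComponent d ((x : R)) = (x : R) := by
      rw [MvPolynomial.homogeneousComponent_of_mem x.2, if_pos rfl]
    have hxab : (x : R) = MvPolynomial.homogeneousComponent d a
        + MvPolynomial.homogeneousComponent d b := by
      conv_lhs => rw [← hxd, ← hab]
      rw [map_add]
    refine Submodule.mem_sup.mpr ⟨⟨MvPolynomial.homogeneousComponent d a,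
      (MvPolynomial.mem_homogeneousSubmodule _ _).mpr
        (MvPolynomial.homogeneousComponent_isHomogeneous d a)⟩,
      mem_SA.mpr (hI a ha d), ⟨MvPolynomial.homogeneousComponent d b,
      (MvPolynomial.mem_homogeneousSubmodule _ _).mpr
        (MvPolynomial.homogeneousComponent_isHomogeneous d b)⟩,
      mem_SA.mpr (hJ b hb d), ?_⟩
    apply Subtype.ext
    exact hxab.symm
  · apply sup_le
    · intro x hx; exact mem_SA.mpr (Ideal.mem_sup_left (mem_SA.mp hx))
    · intro x hx; exact mem_SA.mpr (Ideal.mem_sup_right (mem_SA.mp hx))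

lemma hilb_MV {I J : Ideal R} (hI : IdealHomog I) (hJ : IdealHomog J) (d : ℕ) :
    hilb (I ⊓ J) d + hilb (I ⊔ J) d = hilb I d + hilb J d := by
  have hdim := Submodule.finrank_sup_add_finrank_inf_eq (SA I d) (SA J d)
  have h1 := hilb_add_finrank (I ⊓ J) d
  have h2 := hilb_add_finrank (I ⊔ J) d
  have h3 := hilb_add_finrank I d
  have h4 := hilb_add_finrank J d
  rw [SA_inf] at h1
  rw [SA_sup hI hJ] at h2
  omega


-- exponents of degree zero
lemma deg_zero_eq_zero {m : ι →₀ ℕ} (h : ∑ i ∈ m.support, m i = 0) : m = 0 := by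
  ext j
  by_cases hj : j ∈ m.support
  · exact Finset.sum_eq_zero_iff.mp h j hj
  · exact Finsupp.notMem_support_iff.mp hj

lemma deg_split {m : ι →₀ ℕ} {N : ℕ} (hm : ∑ i ∈ m.support, m i = N + 1) :
    ∃ (i : ι) (m' : ι →₀ ℕ), m = Finsupp.single i 1 + m' ∧ ∑ j ∈ m'.support, m' j = N := by
  have hne : m.support.Nonempty := by
    rcases Finset.eq_empty_or_nonempty m.support with he | h
    · rw [he] at hm; simp at hm
    · exact h
  obtain ⟨i, hi⟩ := hne
  have h1 : (1 : ℕ) ≤ m i := Nat.one_le_iff_ne_zero.mpr (Finsupp.mem_support_iff.mp hi)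
  have hle : Finsupp.single i 1 ≤ m := Finsupp.single_le_iff.mpr h1
  have hms : m = Finsupp.single i 1 + (m - Finsupp.single i 1) :=
    (add_tsub_cancel_of_le hle).symm
  refine ⟨i, m - Finsupp.single i 1, hms, ?_⟩
  have huniv : ∀ m' : ι →₀ ℕ, ∑ j ∈ m'.support, m' j = ∑ j : ι, m' j := fun m' =>
    Finset.sum_subset (Finset.subset_univ _) (fun x _ hx => Finsupp.notMem_support_iff.mp hx)
  have hsingle : ∑ j : ι, (Finsupp.single i 1 : ι →₀ ℕ) j = 1 := by
    simp [Finsupp.single_apply]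
  rw [huniv] at hm ⊢
  rw [hms] at hm
  simp only [Finsupp.add_apply] at hm
  rw [Finset.sum_add_distrib] at hm
  omega

/-- witness can be raised one degree -/
lemma sat_up_one {A : Ideal R} {f : R} {N : ℕ}
    (h : ∀ m : ι →₀ ℕ, ∑ i ∈ m.support, m i = N → MvPolynomial.monomial m (1 : K) * f ∈ A) :
    ∀ m : ι →₀ ℕ, ∑ i ∈ m.support, m i = N + 1 → MvPolynomial.monomial m (1 : K) * f ∈ A := by
  intro m hm
  obtain ⟨i, m', rfl, hm'⟩ := deg_split hm
  rw [MvPolynomial.monomial_single_add, pow_one, mul_assoc]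
  exact Ideal.mul_mem_left _ _ (h m' hm')

lemma sat_up {A : Ideal R} {f : R} {N : ℕ}
    (h : ∀ m : ι →₀ ℕ, ∑ i ∈ m.support, m i = N → MvPolynomial.monomial m (1 : K) * f ∈ A) :
    ∀ N' : ℕ, N ≤ N' → ∀ m : ι →₀ ℕ, ∑ i ∈ m.support, m i = N' →
      MvPolynomial.monomial m (1 : K) * f ∈ A := by
  intro N' hN'
  induction N' with
  | zero =>
    have : N = 0 := by omega
    subst this; exact h
  | succ k ih =>
    rcases Nat.lt_or_ge N (k+1) with hlt | hge
    · exact sat_up_one (ih (by omega))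
    · have : N = k + 1 := by omega
      subst this; exact h

/-- The saturation of an ideal. -/
def satIdeal (A : Ideal (MvPolynomial ι K)) : Ideal (MvPolynomial ι K) where
  carrier := {f | ∃ N : ℕ, ∀ m : ι →₀ ℕ, ∑ i ∈ m.support, m i = N →
    MvPolynomial.monomial m (1 : K) * f ∈ A}
  zero_mem' := ⟨0, fun m _ => by simp⟩
  add_mem' := by
    rintro a b ⟨Na, ha⟩ ⟨Nb, hb⟩
    refine ⟨max Na Nb, fun m hm => ?_⟩
    rw [mul_add]
    exact Submodule.add_mem _ (sat_up ha (max Na Nb) (le_max_left _ _) m hm)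
      (sat_up hb (max Na Nb) (le_max_right _ _) m hm)
  smul_mem' := by
    rintro c f ⟨N, hf⟩
    refine ⟨N, fun m hm => ?_⟩
    have : MvPolynomial.monomial m (1:K) * (c • f)
        = c * (MvPolynomial.monomial m (1:K) * f) := by
      rw [smul_eq_mul]; ring
    rw [this]
    exact Ideal.mul_mem_left _ _ (hf m hm)

lemma le_satIdeal (A : Ideal R) : A ≤ satIdeal A := by
  intro f hf
  refine ⟨0, fun m hm => ?_⟩
  rw [deg_zero_eq_zero hm]
  simpa using hf

lemma mem_satIdeal {A : Ideal R} {f : R} : f ∈ satIdeal A ↔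
    ∃ N : ℕ, ∀ m : ι →₀ ℕ, ∑ i ∈ m.support, m i = N →
      MvPolynomial.monomial m (1 : K) * f ∈ A := Iff.rfl

lemma satIdeal_homog {A : Ideal R} (hA : IdealHomog A) : IdealHomog (satIdeal A) := by
  rintro f ⟨N, hN⟩ e
  refine ⟨N, fun m hm => ?_⟩
  have hmono : (MvPolynomial.monomial m (1:K)).IsHomogeneous N :=
    MvPolynomial.isHomogeneous_monomial _ (by simpa [Finsupp.degree_apply] using hm)
  have : MvPolynomial.monomial m (1:K) * MvPolynomial.homogeneousComponent e f
      = MvPolynomial.homogeneousComponent (e + N) (f * MvPolynomial.monomial m (1:K)) := by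
    rw [hcomp_mul hmono e, mul_comm]
  rw [this]
  have hfm : f * MvPolynomial.monomial m (1:K) ∈ A := by
    rw [mul_comm]; exact hN m hm
  exact hA _ hfm (e + N)

lemma satIdeal_saturated {A : Ideal R} : IdealSaturated (satIdeal A) := by
  intro f hf
  choose Nf hNf using fun i => hf i
  refine ⟨(Finset.univ.sup Nf) + 1, fun m hm => ?_⟩
  obtain ⟨i, m', rfl, hm'⟩ := deg_split hm
  rw [MvPolynomial.monomial_single_add, pow_one]
  have : MvPolynomial.X i * MvPolynomial.monomial m' (1:K) * f
      = MvPolynomial.monomial m' (1:K) * (MvPolynomial.X i * f) := by ring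
  rw [this]
  exact sat_up (hNf i) _ (by
    have : Nf i ≤ Finset.univ.sup Nf := Finset.le_sup (Finset.mem_univ i)
    omega) m' hm'

/-- any homogeneous polynomial of the witness degree multiplies into `A`. -/
lemma homog_mul_mem_of_witness {A : Ideal R} {f : R} {N : ℕ}
    (h : ∀ m : ι →₀ ℕ, ∑ i ∈ m.support, m i = N → MvPolynomial.monomial m (1 : K) * f ∈ A)
    {g : R} (hg : g ∈ Md N) : g * f ∈ A := by
  rw [g.as_sum, Finset.sum_mul]
  apply Submodule.sum_mem
  intro m hm
  have hdeg : ∑ i ∈ m.support, m i = N :=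
    homog_support_deg' hg (MvPolynomial.mem_support_iff.mp hm)
  have : MvPolynomial.monomial m (MvPolynomial.coeff m g) * f
      = MvPolynomial.C (MvPolynomial.coeff m g) * (MvPolynomial.monomial m (1:K) * f) := by
    rw [← mul_assoc, MvPolynomial.C_mul_monomial, mul_one]
  rw [this]
  exact Ideal.mul_mem_left _ _ (h m hdeg)

lemma zeroLocusI_antitone {A B : Ideal R} (h : A ≤ B) : zeroLocusI B ⊆ zeroLocusI A :=
  fun P hP f hf => hP f (h hf)

lemma zeroLocusI_inf_subset (I J : Ideal R) :
    zeroLocusI (I ⊓ J) ⊆ zeroLocusI I ∪ zeroLocusI J := by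
  intro P hP
  by_contra hcon
  simp only [Set.mem_union, not_or] at hcon
  obtain ⟨hnI, hnJ⟩ := hcon
  simp only [zeroLocusI, Set.mem_setOf_eq, not_forall] at hnI hnJ
  obtain ⟨f, hf, hfe⟩ := hnI
  obtain ⟨g, hg, hge⟩ := hnJ
  have hfg : f * g ∈ I ⊓ J :=
    ⟨Ideal.mul_mem_right g I hf, Ideal.mul_mem_left J f hg⟩
  have := hP _ hfg
  unfold vanishAt at this hfe hge
  rw [map_mul] at this
  exact hfe (by
    rcases mul_eq_zero.mp this with h | h
    · exact h
    · exact absurd h hge)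


/-- Over an infinite field, a linear functional avoiding finitely many nonzero vectors. -/
lemma exists_dual_ne_zero [Infinite K] (T : Finset (ι → K)) (hT : ∀ v ∈ T, v ≠ 0) :
    ∃ φ : (ι → K) →ₗ[K] K, ∀ v ∈ T, φ v ≠ 0 := by
  classical
  induction T using Finset.induction_on with
  | empty => exact ⟨0, by simp⟩
  | @insert v T hvT ih =>
    obtain ⟨φ, hφ⟩ := ih (fun u hu => hT u (Finset.mem_insert_of_mem hu))
    have hv : v ≠ 0 := hT v (Finset.mem_insert_self v T)
    obtain ⟨j, hj⟩ := Function.ne_iff.mp hv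
    set ψ : (ι → K) →ₗ[K] K := LinearMap.proj j with hψ
    have hψv : ψ v ≠ 0 := by rw [hψ]; simpa using hj
    set bad : Finset K := (insert v T).image (fun u => - φ u / ψ u) with hbad
    obtain ⟨c, hc⟩ := Infinite.exists_notMem_finset bad
    refine ⟨φ + c • ψ, fun u hu => ?_⟩
    by_cases hψu : ψ u = 0
    · have huT : u ∈ T := by
        rcases Finset.mem_insert.mp hu with rfl | h
        · exact absurd hψu hψv
        · exact h
      simp only [LinearMap.add_apply, LinearMap.smul_apply, hψu, smul_eq_mul, mul_zero, add_zero]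
      exact hφ u huT
    · intro hzero
      apply hc
      rw [hbad]
      apply Finset.mem_image.mpr
      refine ⟨u, hu, ?_⟩
      simp only [LinearMap.add_apply, LinearMap.smul_apply, smul_eq_mul] at hzero
      field_simp
      linear_combination -hzero

lemma eval_dualToPoly (φ : Module.Dual K (ι → K)) (x : ι → K) :
    MvPolynomial.eval x (dualToPoly φ) = φ x := by
  unfold dualToPoly
  rw [map_sum]
  rw [LinearMap.pi_apply_eq_sum_univ φ x]
  apply Finset.sum_congr rfl
  intro i _
  simp only [MvPolynomial.smul_eval, MvPolynomial.eval_X, smul_eq_mul]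
  rw [mul_comm]
  congr 1
  congr 1
  funext j
  rw [Pi.single_apply]
  simp [eq_comm]

lemma dualToPoly_mem_M1 (φ : Module.Dual K (ι → K)) : dualToPoly φ ∈ Md 1 := by
  apply Submodule.sum_mem
  intro i _
  exact Submodule.smul_mem _ _
    ((MvPolynomial.mem_homogeneousSubmodule _ _).mpr (MvPolynomial.isHomogeneous_X _ _))

/-- A choice of a linear form not vanishing at finitely many projective points. -/
lemma exists_linear_nonvanishing [Infinite K] {S : Set (Pj K ι)} (hS : S.Finite) :
    ∃ L ∈ Md 1, ∀ P ∈ S, ¬ vanishAt L P := by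
  classical
  set T : Finset (ι → K) := hS.toFinset.image Projectivization.rep with hT
  have hTnz : ∀ v ∈ T, v ≠ 0 := by
    intro v hv
    obtain ⟨P, _, rfl⟩ := Finset.mem_image.mp hv
    exact Projectivization.rep_nonzero P
  obtain ⟨φ, hφ⟩ := exists_dual_ne_zero T hTnz
  refine ⟨dualToPoly φ, dualToPoly_mem_M1 φ, fun P hP hvan => ?_⟩
  unfold vanishAt at hvan
  rw [eval_dualToPoly] at hvan
  exact hφ P.rep (Finset.mem_image.mpr ⟨P, hS.mem_toFinset.mpr hP, rfl⟩) hvan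

/-- degree-1 elements of an ideal kill the linear span. -/
lemma eval_zero_of_mem_linSpan {A : Ideal R} {u : R} (hu : u ∈ A) (hu1 : u ∈ Md 1)
    {x : ι → K} (hx : x ∈ linSpanI A) : MvPolynomial.eval x u = 0 := by
  set φu : Module.Dual K (ι → K) :=
    ∑ i : ι, MvPolynomial.coeff (Finsupp.single i 1) u • LinearMap.proj i with hφu
  have hform : dualToPoly φu = u := by
    unfold dualToPoly
    have happ : ∀ i : ι, φu (Pi.single i 1) = MvPolynomial.coeff (Finsupp.single i 1) u := by
      intro i
      rw [hφu]
      simp only [LinearMap.sum_apply, LinearMap.smul_apply, LinearMap.proj_apply, smul_eq_mul]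
      rw [Finset.sum_eq_single i]
      · simp
      · intro b _ hbi
        have hz : (Pi.single i (1:K) : ι → K) b = 0 := by
          rw [Pi.single_apply, if_neg hbi]
        rw [hz, mul_zero]
      · intro h; exact absurd (Finset.mem_univ i) h
    rw [Finset.sum_congr rfl (fun i _ => by rw [happ i])]
    exact (mem_M1_rep hu1).symm
  have hmem : φu ∈ {φ : Module.Dual K (ι → K) | dualToPoly φ ∈ A} := by
    rw [Set.mem_setOf_eq, hform]; exact hu
  have hker : x ∈ LinearMap.ker φu := by
    have := hx
    unfold linSpanI dualZero at this
    rw [Submodule.mem_iInf] at this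
    have h2 := this φu
    rw [Submodule.mem_iInf] at h2
    exact h2 hmem
  rw [LinearMap.mem_ker] at hker
  calc MvPolynomial.eval x u = MvPolynomial.eval x (dualToPoly φu) := by rw [hform]
    _ = φu x := eval_dualToPoly φu x
    _ = 0 := hker


lemma gradedDim_eq_SA (A : Ideal R) (d : ℕ) :
    gradedDim A d = Module.finrank K ↥(SA A d) := by
  have hle : (Md d) ⊓ (Submodule.restrictScalars K A) ≤ Md d := inf_le_left
  have hcomap : Submodule.comap (Md d).subtype ((Md d) ⊓ (Submodule.restrictScalars K A))
      = SA A d := by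
    ext x
    simp only [Submodule.mem_comap, Submodule.mem_inf, SA]
    exact ⟨fun h => h.2, fun h => ⟨x.2, h⟩⟩
  rw [gradedDim, ← hcomap]
  exact (Submodule.comapSubtypeEquivOfLe hle).finrank_eq.symm

lemma gradedQuotDim_eq_hilb (A : Ideal R) (d : ℕ) : gradedQuotDim A d = hilb A d := by
  have h1 := hilb_add_finrank A d
  have h2 := gradedDim_eq_SA A d
  unfold gradedQuotDim
  omega


/-- Let `X ⊂ ℙ^r` be an integral non-degenerate projective variety
(char 0, algebraically closed field), `b ≥ 2`, and `q ∈ ℙ^r`.  Suppose `Z` and `A` are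
zero-dimensional subschemes of `X` (encoded by their saturated homogeneous ideals `I`
and `J`) with `Z ≠ A`, `q ∈ ⟨Z⟩ ∩ ⟨A⟩`, `q ∉ ⟨Z'⟩` for every proper subscheme `Z' ⊊ Z`
and `q ∉ ⟨A'⟩` for every proper subscheme `A' ⊊ A`.  Then `h^1(ℙ^r, I_{Z∪A}(1)) > 0`:
writing `Q = I ⊓ J` for the ideal of `Z ∪ A`, the degree of `Z ∪ A` (the eventual value
`D` of the Hilbert function of `Q`) exceeds the number of linear conditions that `Z ∪ A`
imposes on hyperplanes. -/
theorem stmt_15 {K : Type} [Field K] [IsAlgClosed K] [CharZero K]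
    {ι : Type} [Fintype ι] [DecidableEq ι] {b : ℕ} (hb : 2 ≤ b)
    (X : Set (Pj K ι)) (hXcl : IsZClosed X) (hXirr : IsZIrred X) (hXnd : Nondegenerate X)
    (q : Pj K ι)
    (I J : Ideal (MvPolynomial ι K))
    (hI : SchemeIdeal X I) (hJ : SchemeIdeal X J)
    (hne : I ≠ J)
    (hqZ : q.rep ∈ linSpanI I) (hqA : q.rep ∈ linSpanI J)
    (hminZ : ∀ I' : Ideal (MvPolynomial ι K), SchemeIdeal X I' → I < I' → q.rep ∉ linSpanI I')
    (hminA : ∀ J' : Ideal (MvPolynomial ι K), SchemeIdeal X J' → J < J' → q.rep ∉ linSpanI J') :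
    ∃ N D : ℕ, (∀ d : ℕ, N ≤ d → gradedQuotDim (I ⊓ J) d = D) ∧
      Fintype.card ι - Module.finrank K
        ↥((MvPolynomial.homogeneousSubmodule ι K 1) ⊓ (Submodule.restrictScalars K (I ⊓ J)))
        < D := by
  classical
  obtain ⟨hIhom, hIsat, hIX, hIfin⟩ := hI
  obtain ⟨hJhom, hJsat, hJX, hJfin⟩ := hJ
  have hQhom : IdealHomog (I ⊓ J) := fun f hf d => ⟨hIhom f hf.1 d, hJhom f hf.2 d⟩
  have hQsat : IdealSaturated (I ⊓ J) := fun f hf =>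
    ⟨hIsat f (fun i => (hf i).1), hJsat f (fun i => (hf i).2)⟩
  have hQfin : (zeroLocusI (I ⊓ J)).Finite :=
    Set.Finite.subset (hIfin.union hJfin) (zeroLocusI_inf_subset I J)
  obtain ⟨L, hL, hLnv⟩ := exists_linear_nonvanishing hQfin
  have hLnvI : ∀ P ∈ zeroLocusI I, ¬ vanishAt L P := fun P hP =>
    hLnv P (zeroLocusI_antitone inf_le_left hP)
  have hLnvJ : ∀ P ∈ zeroLocusI J, ¬ vanishAt L P := fun P hP =>
    hLnv P (zeroLocusI_antitone inf_le_right hP)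
  obtain ⟨N₀, hN₀⟩ := covers_of_large hQhom hL hLnv
  have hmonoQ := hilb_mono hQhom hQsat hL hLnv
  have hconst : ∀ d, N₀ ≤ d → hilb (I ⊓ J) d = hilb (I ⊓ J) N₀ := by
    intro d hd
    obtain ⟨k, rfl⟩ := Nat.le.dest hd
    induction k with
    | zero => rfl
    | succ k ih =>
      have hstep : hilb (I ⊓ J) (N₀ + k + 1) = hilb (I ⊓ J) (N₀ + k) :=
        le_antisymm (hilb_succ_le_of_covers hL (hN₀ _ (by omega)))
          (hilb_le_succ hQhom hQsat hL hLnv _)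
      rw [show N₀ + (k+1) = N₀ + k + 1 by omega, hstep]
      exact ih (by omega)
  refine ⟨N₀, hilb (I ⊓ J) N₀, ?_, ?_⟩
  · intro d hd
    rw [gradedQuotDim_eq_hilb]
    exact hconst d hd
  · have hbridge : Fintype.card ι - Module.finrank K
        ↥((MvPolynomial.homogeneousSubmodule ι K 1) ⊓ (Submodule.restrictScalars K (I ⊓ J)))
        = hilb (I ⊓ J) 1 := by
      have h1 := hilb_add_finrank (I ⊓ J) 1
      have h2 := gradedDim_eq_SA (I ⊓ J) 1
      have h3 := finrank_M1 (K := K) (ι := ι)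
      unfold gradedDim at h2
      omega
    rw [hbridge]
    by_contra hge
    push_neg at hge
    -- hge : hilb (I⊓J) N₀ ≤ hilb (I⊓J) 1
    have hle1 : hilb (I ⊓ J) 1 ≤ hilb (I ⊓ J) N₀ := by
      calc hilb (I ⊓ J) 1 ≤ hilb (I ⊓ J) (max N₀ 1) := hmonoQ 1 _ (le_max_right _ _)
        _ = hilb (I ⊓ J) N₀ := hconst _ (le_max_left _ _)
    have heq1 : hilb (I ⊓ J) 1 = hilb (I ⊓ J) N₀ := le_antisymm hle1 hge
    have hQconst : ∀ d, 1 ≤ d → hilb (I ⊓ J) d = hilb (I ⊓ J) 1 := by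
      intro d hd
      apply le_antisymm
      · calc hilb (I ⊓ J) d ≤ hilb (I ⊓ J) (max N₀ d) := hmonoQ d _ (le_max_right _ _)
          _ = hilb (I ⊓ J) N₀ := hconst _ (le_max_left _ _)
          _ = hilb (I ⊓ J) 1 := heq1.symm
      · exact hmonoQ 1 d hd
    have hcovQ : ∀ d, 1 ≤ d → coversP (I ⊓ J) L d := by
      intro d hd
      exact covers_of_lmulQ_surj hL (lmulQ_surj_of_eq hQhom hQsat hL hLnv
        (by rw [hQconst d hd, hQconst (d+1) (by omega)]))
    have hcovI : ∀ d, 1 ≤ d → coversP I L d := fun d hd =>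
      coversP_mono inf_le_left (hcovQ d hd)
    have hcovJ : ∀ d, 1 ≤ d → coversP J L d := fun d hd =>
      coversP_mono inf_le_right (hcovQ d hd)
    have hcovSup : ∀ d, 1 ≤ d → coversP (I ⊔ J) L d := fun d hd =>
      coversP_mono (le_trans inf_le_left le_sup_left) (hcovQ d hd)
    have hIconst : ∀ d, 1 ≤ d → hilb I d = hilb I 1 := by
      intro d hd
      obtain ⟨k, rfl⟩ := Nat.le.dest hd
      induction k with
      | zero => rfl
      | succ k ih =>
        have hstep : hilb I (1 + k + 1) = hilb I (1 + k) :=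
          le_antisymm (hilb_succ_le_of_covers hL (hcovI _ (by omega)))
            (hilb_le_succ hIhom hIsat hL hLnvI _)
        rw [show 1 + (k+1) = 1 + k + 1 by omega, hstep]
        exact ih (by omega)
    have hJconst : ∀ d, 1 ≤ d → hilb J d = hilb J 1 := by
      intro d hd
      obtain ⟨k, rfl⟩ := Nat.le.dest hd
      induction k with
      | zero => rfl
      | succ k ih =>
        have hstep : hilb J (1 + k + 1) = hilb J (1 + k) :=
          le_antisymm (hilb_succ_le_of_covers hL (hcovJ _ (by omega)))
            (hilb_le_succ hJhom hJsat hL hLnvJ _)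
        rw [show 1 + (k+1) = 1 + k + 1 by omega, hstep]
        exact ih (by omega)
    have hSupConst : ∀ d, 1 ≤ d → hilb (I ⊔ J) d = hilb (I ⊔ J) 1 := by
      intro d hd
      have mvd := hilb_MV hIhom hJhom d
      have mv1 := hilb_MV hIhom hJhom 1
      have e1 := hQconst d hd
      have e2 := hIconst d hd
      have e3 := hJconst d hd
      omega
    have hInjSup : ∀ d, 1 ≤ d → ∀ f, f ∈ MvPolynomial.homogeneousSubmodule ι K d →
        L * f ∈ I ⊔ J → f ∈ I ⊔ J := by
      intro d hd f hf hLf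
      have hsurj := lmulQ_surj_of_covers hL (hcovSup d hd)
      have heq : hilb (I ⊔ J) d = hilb (I ⊔ J) (d+1) := by
        rw [hSupConst d hd, hSupConst (d+1) (by omega)]
      have hinj := lmulQ_inj_of_eq_surj hL heq hsurj
      have hz : lmulQ (I ⊔ J) hL d (Submodule.Quotient.mk ⟨f, hf⟩) = 0 := by
        rw [lmulQ, Submodule.mapQ_apply, Submodule.Quotient.mk_eq_zero]
        exact mem_SA.mpr hLf
      have h0 : lmulQ (I ⊔ J) hL d (Submodule.Quotient.mk ⟨f, hf⟩)
          = lmulQ (I ⊔ J) hL d 0 := by rw [hz, map_zero]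
      have := hinj h0
      rw [Submodule.Quotient.mk_eq_zero] at this
      exact mem_SA.mp this
    have hPow : ∀ (n : ℕ) (k : ℕ), 1 ≤ k → ∀ f,
        f ∈ MvPolynomial.homogeneousSubmodule ι K k → L ^ n * f ∈ I ⊔ J → f ∈ I ⊔ J := by
      intro n
      induction n with
      | zero =>
        intro k hk f hf h
        rwa [pow_zero, one_mul] at h
      | succ n ih =>
        intro k hk f hf h
        have hLfmem : L * f ∈ MvPolynomial.homogeneousSubmodule ι K (k+1) :=
          (lmul hL k ⟨f, hf⟩).2
        have h' : L ^ n * (L * f) ∈ I ⊔ J := by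
          have : L ^ (n+1) * f = L ^ n * (L * f) := by ring
          rwa [this] at h
        have := ih (k+1) (by omega) (L * f) hLfmem h'
        exact hInjSup k hk f hf this
    have hKp1 : ∀ f, f ∈ MvPolynomial.homogeneousSubmodule ι K 1 →
        f ∈ satIdeal (I ⊔ J) → f ∈ I ⊔ J := by
      intro f hf1 hfK
      obtain ⟨N, hN⟩ := hfK
      have hLN : L ^ N ∈ MvPolynomial.homogeneousSubmodule ι K N := by
        have := ((MvPolynomial.mem_homogeneousSubmodule _ _).mp hL).pow N
        rwa [one_mul] at this
      exact hPow N 1 le_rfl f hf1 (homog_mul_mem_of_witness hN hLN)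
    have hspan : q.rep ∈ linSpanI (satIdeal (I ⊔ J)) := by
      unfold linSpanI dualZero
      rw [Submodule.mem_iInf]
      intro φ
      rw [Submodule.mem_iInf]
      intro hφ
      rw [LinearMap.mem_ker]
      have hdp1 : dualToPoly φ ∈ MvPolynomial.homogeneousSubmodule ι K 1 :=
        dualToPoly_mem_M1 φ
      have hdpIJ : dualToPoly φ ∈ I ⊔ J := hKp1 _ hdp1 hφ
      obtain ⟨u, hu, v, hv, huv⟩ := Submodule.mem_sup.mp hdpIJ
      have hu1 : MvPolynomial.homogeneousComponent 1 u ∈ I := hIhom u hu 1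
      have hv1 : MvPolynomial.homogeneousComponent 1 v ∈ J := hJhom v hv 1
      have hcomp : dualToPoly φ = MvPolynomial.homogeneousComponent 1 u
          + MvPolynomial.homogeneousComponent 1 v := by
        have := congrArg (MvPolynomial.homogeneousComponent 1) huv
        rw [map_add, MvPolynomial.homogeneousComponent_of_mem hdp1, if_pos rfl] at this
        exact this.symm
      have heval : φ q.rep = MvPolynomial.eval q.rep (dualToPoly φ) :=
        (eval_dualToPoly φ q.rep).symm
      rw [heval, hcomp, map_add,
        eval_zero_of_mem_linSpan hu1 ((MvPolynomial.mem_homogeneousSubmodule _ _).mpr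
          (MvPolynomial.homogeneousComponent_isHomogeneous 1 u)) hqZ,
        eval_zero_of_mem_linSpan hv1 ((MvPolynomial.mem_homogeneousSubmodule _ _).mpr
          (MvPolynomial.homogeneousComponent_isHomogeneous 1 v)) hqA, add_zero]
    have hIKp : I ≤ satIdeal (I ⊔ J) := le_trans le_sup_left (le_satIdeal _)
    have hSupHom : IdealHomog (I ⊔ J) := by
      intro f hf d
      obtain ⟨a, ha, c, hc, rfl⟩ := Submodule.mem_sup.mp hf
      rw [map_add]
      exact Submodule.add_mem _ (Ideal.mem_sup_left (hIhom a ha d))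
        (Ideal.mem_sup_right (hJhom c hc d))
    have hKpScheme : SchemeIdeal X (satIdeal (I ⊔ J)) :=
      ⟨satIdeal_homog hSupHom, satIdeal_saturated,
        le_trans hIX hIKp, hIfin.subset (zeroLocusI_antitone hIKp)⟩
    by_cases hKI : satIdeal (I ⊔ J) = I
    · have hJle : J ≤ I := le_trans le_sup_right (le_trans (le_satIdeal _) (le_of_eq hKI))
      have hJI : J < I := lt_of_le_of_ne hJle (fun h => hne h.symm)
      exact hminA I ⟨hIhom, hIsat, hIX, hIfin⟩ hJI hqZ
    · have hIKp' : I < satIdeal (I ⊔ J) := lt_of_le_of_ne hIKp (fun h => hKI h.symm)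
      exact hminZ _ hKpScheme hIKp' hspan


end SecantPaper
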